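/- Assume T''(x₀) = 0 and T'''(x₀) = 0. Then there exist δ₀ > 0 and K₁ > 0 such that for every δ ∈ (0, δ₀] and all x, y, z in the disk {|w − x₀| < δ} with x ≠ y and z ≠ y, one has |g(x,y) − g(z,y)| ≤ K₁·|x − z|·δ. -/

import Mathlib

open Complex

/-- The complex conjugate `g(x,y)` of the `x`-gradient of the regular part of the Green's
function: `g(x,y) = (1/(2π))·(T'(x)/(T(x)−T(y)) − conj(T(y))·T'(x)/(conj(T(y))·T(x)−1)
− 1/(x−y))`. -/
noncomputable def gfun (T : ℂ → ℂ) (x y : ℂ) : ℂ :=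
  (2 * (Real.pi : ℂ))⁻¹ *
    (deriv T x / (T x - T y)
      - (starRingEnd ℂ) (T y) * deriv T x / ((starRingEnd ℂ) (T y) * T x - 1)
      - 1 / (x - y))


open Metric Set Filter Topology Complex

lemma mvt' {f f' : ℂ → ℂ} {s : Set ℂ} (hs : Convex ℝ s) (hf : ∀ w ∈ s, HasDerivAt f (f' w) w)
    {M : ℝ} (hM : ∀ w ∈ s, ‖f' w‖ ≤ M) {x y : ℂ} (hx : x ∈ s) (hy : y ∈ s) :
    ‖f y - f x‖ ≤ M * ‖y - x‖ :=
  hs.norm_image_sub_le_of_norm_hasDerivWithin_le (fun w hw => (hf w hw).hasDerivWithinAt) hM hx hy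

lemma taylor2 {f f' f'' : ℂ → ℂ} {s : Set ℂ} (hs : Convex ℝ s)
    (hf : ∀ w ∈ s, HasDerivAt f (f' w) w) (hf' : ∀ w ∈ s, HasDerivAt f' (f'' w) w)
    {M : ℝ} (hM : ∀ w ∈ s, ‖f'' w‖ ≤ M) (hM0 : 0 ≤ M)
    {x y : ℂ} (hx : x ∈ s) (hy : y ∈ s) :
    ‖f y - f x - f' x * (y - x)‖ ≤ M * ‖y - x‖ * ‖y - x‖ := by
  have hseg : segment ℝ x y ⊆ s := hs.segment_subset hx hy
  have key : ∀ w ∈ segment ℝ x y, ‖f' w - f' x‖ ≤ M * ‖y - x‖ := by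
    intro w hw
    have h1 : ‖f' w - f' x‖ ≤ M * ‖w - x‖ := mvt' hs hf' hM hx (hseg hw)
    have h2 : ‖w - x‖ ≤ ‖y - x‖ := by
      obtain ⟨a, b, ha, hb, hab, rfl⟩ := hw
      have he : a • x + b • y - x = b • (y - x) := by
        have : a = 1 - b := by linarith
        subst this; module
      rw [he, norm_smul]
      have : ‖b‖ = b := Real.norm_of_nonneg hb
      rw [this]
      nlinarith [norm_nonneg (y - x)]
    exact h1.trans (by nlinarith [norm_nonneg (w - x)])
  have hg : ∀ w ∈ segment ℝ x y, HasDerivAt (fun u => f u - f' x * u) (f' w - f' x) w := by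
    intro w hw
    exact ((hf w (hseg hw)).sub ((hasDerivAt_id w).const_mul (f' x))).congr_deriv (by ring)
  have := mvt' (convex_segment x y) hg key (left_mem_segment ℝ x y) (right_mem_segment ℝ x y)
  calc ‖f y - f x - f' x * (y - x)‖
      = ‖(f y - f' x * y) - (f x - f' x * x)‖ := by ring_nf
    _ ≤ M * ‖y - x‖ * ‖y - x‖ := by
        refine le_trans this (by nlinarith [norm_nonneg (y - x)])

lemma deriv_ne_zero_of_injOn {f : ℂ → ℂ} {s : Set ℂ} (hs : IsOpen s) {x₀ : ℂ} (hx : x₀ ∈ s)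
    (hf : DifferentiableOn ℂ f s) (hinj : Set.InjOn f s) : deriv f x₀ ≠ 0 := by
  intro hb
  have hsn : s ∈ 𝓝 x₀ := hs.mem_nhds hx
  set g : ℂ → ℂ := fun z => f z - f x₀ with hgdef
  have hga : AnalyticAt ℂ g x₀ := ((hf.analyticOnNhd hs) x₀ hx).sub analyticAt_const
  -- order is finite
  have hne : ¬ ∀ᶠ z in 𝓝 x₀, g z = 0 := by
    intro hev
    have hmem : ∀ᶠ z in 𝓝 x₀, z ∈ s := hsn
    have hne' : ∀ᶠ z in 𝓝[≠] x₀, z ≠ x₀ := eventually_mem_nhdsWithin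
    obtain ⟨z, ⟨hzs, hz0⟩, hzne⟩ :=
      (((hmem.and hev).filter_mono nhdsWithin_le_nhds).and hne').exists
    have : f z = f x₀ := by simpa [hgdef, sub_eq_zero] using hz0
    exact hzne (hinj hzs hx this)
  have hord : analyticOrderAt g x₀ ≠ ⊤ := fun h => hne (analyticOrderAt_eq_top.mp h)
  obtain ⟨n, hn⟩ := WithTop.ne_top_iff_exists.mp hord
  obtain ⟨h, hha, hh0, heq⟩ := (hga.analyticOrderAt_eq_natCast (n := n)).mp hn.symm
  simp only [smul_eq_mul] at heq
  -- n ≥ 2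
  have hgx0 : g x₀ = 0 := by simp [hgdef]
  have hn0 : n ≠ 0 := by
    intro h0
    have := heq.self_of_nhds
    rw [h0, pow_zero, one_mul, hgx0] at this
    exact hh0 this.symm
  have hgderiv : deriv g x₀ = 0 := by
    have : deriv g x₀ = deriv f x₀ := by
      simp [hgdef, deriv_sub_const]
    rw [this, hb]
  have hn1 : n ≠ 1 := by
    intro h1
    subst h1
    have hder : HasDerivAt (fun z => (z - x₀) ^ 1 * h z) (h x₀) x₀ := by
      have h1' : HasDerivAt (fun z : ℂ => z - x₀) 1 x₀ := (hasDerivAt_id x₀).sub_const x₀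
      have := h1'.mul hha.differentiableAt.hasDerivAt
      simp only [pow_one]; exact this.congr_deriv (by simp)
    have : deriv g x₀ = h x₀ := by
      rw [Filter.EventuallyEq.deriv_eq heq]
      exact hder.deriv
    rw [hgderiv] at this
    exact hh0 this.symm
  have hn2 : 2 ≤ n := by omega
  have hnC : (n : ℂ) ≠ 0 := Nat.cast_ne_zero.mpr hn0
  -- n-th root
  set c : ℂ := Complex.exp (Complex.log (h x₀) / n) with hcdef
  have hc0 : c ≠ 0 := Complex.exp_ne_zero _
  have hcn : c ^ n = h x₀ := by
    rw [hcdef, ← Complex.exp_nat_mul, mul_div_cancel₀ _ hnC, Complex.exp_log hh0]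
  set φ : ℂ → ℂ := fun z => c * Complex.exp ((n : ℂ)⁻¹ * Complex.log (h z / h x₀)) with hφdef
  have hφa : AnalyticAt ℂ φ x₀ := by
    apply analyticAt_const.mul
    apply analyticAt_cexp.comp
    apply analyticAt_const.mul
    apply (analyticAt_clog ?_).comp (hha.div analyticAt_const hh0)
    simp [div_self hh0]
  have hφx : φ x₀ = c := by
    simp [hφdef, div_self hh0, Complex.log_one]
  set ψ : ℂ → ℂ := fun z => (z - x₀) * φ z with hψdef
  have hψa : AnalyticAt ℂ ψ x₀ := ((analyticAt_id).sub analyticAt_const).mul hφa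
  have hψd : HasDerivAt ψ c x₀ := by
    have h1' : HasDerivAt (fun z : ℂ => z - x₀) 1 x₀ := (hasDerivAt_id x₀).sub_const x₀
    have := h1'.mul hφa.differentiableAt.hasDerivAt
    exact this.congr_deriv (by simp [hφx])
  have hψs : HasStrictDerivAt ψ c x₀ :=
    (hψa.contDiffAt (n := 1)).hasStrictDerivAt' hψd one_ne_zero
  have hψ0 : ψ x₀ = 0 := by simp [hψdef]
  have hmap : Filter.map ψ (𝓝 x₀) = 𝓝 0 := by
    have := hψs.map_nhds_eq hc0
    rwa [hψ0] at this
  -- eventually f z - f x₀ = ψ z ^ n, and z ∈ s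
  have hhne : ∀ᶠ z in 𝓝 x₀, h z ≠ 0 :=
    hha.continuousAt.eventually_ne hh0
  have hU : ∀ᶠ z in 𝓝 x₀, (f z - f x₀ = ψ z ^ n ∧ z ∈ s) := by
    filter_upwards [heq, hhne, hsn] with z h1 h2 h3
    refine ⟨?_, h3⟩
    have hpow : φ z ^ n = h z := by
      have hexp : Complex.exp ((n : ℂ)⁻¹ * Complex.log (h z / h x₀)) ^ n = h z / h x₀ := by
        rw [← Complex.exp_nat_mul,
          show (n:ℂ) * ((n:ℂ)⁻¹ * Complex.log (h z / h x₀)) = Complex.log (h z / h x₀) by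
            field_simp]
        exact Complex.exp_log (div_ne_zero h2 hh0)
      rw [hφdef]
      simp only
      rw [mul_pow, hcn, hexp]
      field_simp
    rw [hψdef]
    simp only
    rw [mul_pow, hpow]
    exact h1
  set U : Set ℂ := {z | (f z - f x₀ = ψ z ^ n ∧ z ∈ s)} with hUdef
  have hUn : U ∈ 𝓝 x₀ := hU
  have hV : ψ '' U ∈ 𝓝 (0:ℂ) := by
    rw [← hmap]
    exact image_mem_map hUn
  -- the root of unity
  set ω : ℂ := Complex.exp (2 * Real.pi * Complex.I / n) with hωdef
  have hωn : ω ^ n = 1 := by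
    rw [hωdef, ← Complex.exp_nat_mul, mul_div_cancel₀ _ hnC, Complex.exp_two_pi_mul_I]
  have hω1 : ω ≠ 1 := by
    intro h1
    rw [hωdef] at h1
    obtain ⟨k, hk⟩ := Complex.exp_eq_one_iff.mp h1
    have h2πI : (2 * Real.pi * Complex.I : ℂ) ≠ 0 := by
      exact mul_ne_zero (mul_ne_zero two_ne_zero
        (Complex.ofReal_ne_zero.mpr Real.pi_ne_zero)) Complex.I_ne_zero
    have h5 : (2 * Real.pi * Complex.I : ℂ) = k * (2 * Real.pi * Complex.I) * n := by
      rw [← hk]; field_simp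
    have h3 : ((k:ℂ) * n - 1) * (2 * Real.pi * Complex.I) = 0 := by linear_combination -h5
    have : (k : ℂ) * (n : ℂ) = 1 := by
      rcases mul_eq_zero.mp h3 with h4 | h4
      · linear_combination h4
      · exact absurd h4 h2πI
    have hkn : ((k * n : ℤ) : ℂ) = ((1 : ℤ) : ℂ) := by push_cast; linear_combination this
    have hkn' : k * n = 1 := by exact_mod_cast hkn
    have : (n : ℤ) ≤ 1 := Int.le_of_dvd one_pos ⟨k, by linarith⟩
    omega
  have hω0 : ω ≠ 0 := Complex.exp_ne_zero _
  have hW : (fun w => ω * w) ⁻¹' (ψ '' U) ∈ 𝓝 (0:ℂ) := by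
    apply ContinuousAt.preimage_mem_nhds (continuous_const.mul continuous_id).continuousAt
    simpa using hV
  have hne0 : ∀ᶠ w in 𝓝[≠] (0:ℂ), w ≠ 0 := eventually_mem_nhdsWithin
  have hVW : ∀ᶠ w in 𝓝 (0:ℂ), w ∈ ψ '' U ∧ ω * w ∈ ψ '' U := Filter.inter_mem hV hW
  obtain ⟨w, ⟨hwV, hwW⟩, hwne⟩ := ((hVW.filter_mono nhdsWithin_le_nhds).and hne0).exists
  obtain ⟨z₁, hz₁U, hz₁⟩ := hwV
  obtain ⟨z₂, hz₂U, hz₂⟩ := hwW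
  have hwne' : w ≠ 0 := hwne
  have hfz : f z₁ = f z₂ := by
    have e1 : f z₁ - f x₀ = w ^ n := by rw [hz₁U.1, hz₁]
    have e2 : f z₂ - f x₀ = w ^ n := by
      rw [hz₂U.1, hz₂, mul_pow, hωn, one_mul]
    linear_combination e1 - e2
  have hz12 : z₁ = z₂ := hinj hz₁U.2 hz₂U.2 hfz
  rw [hz12, hz₂] at hz₁
  have : ω * w = 1 * w := by rw [one_mul]; exact hz₁
  exact hω1 (mul_right_cancel₀ hwne' this)

set_option maxHeartbeats 1000000 in
/-- if `T''(x₀) = 0` and `T'''(x₀) = 0` then, on small disks around `x₀`,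
`|g(x,y) − g(z,y)| ≤ K₁·|x−z|·δ`. -/
theorem stmt7
    (Ω : Set ℂ) (hΩo : IsOpen Ω) (hΩb : Bornology.IsBounded Ω)
    (hΩc : IsConnected Ω) (hΩsc : SimplyConnectedSpace Ω)
    (x₀ : ℂ) (hx₀ : x₀ ∈ Ω)
    (T : ℂ → ℂ) (hTd : DifferentiableOn ℂ T Ω)
    (hTbij : Set.BijOn T Ω (Metric.ball 0 1))
    (hT0 : T x₀ = 0)
    (hT2 : iteratedDeriv 2 T x₀ = 0)
    (hT3 : iteratedDeriv 3 T x₀ = 0) :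
    ∃ δ₀ > (0:ℝ), ∃ K₁ > (0:ℝ), Metric.ball x₀ δ₀ ⊆ Ω ∧
      ∀ δ : ℝ, 0 < δ → δ ≤ δ₀ →
        ∀ x ∈ Metric.ball x₀ δ, ∀ y ∈ Metric.ball x₀ δ, ∀ z ∈ Metric.ball x₀ δ,
          x ≠ y → z ≠ y →
          ‖gfun T x y - gfun T z y‖ ≤ K₁ * ‖x - z‖ * δ := by
  have hb0 : deriv T x₀ ≠ 0 := deriv_ne_zero_of_injOn hΩo hx₀ hTd hTbij.injOn
  have hA : AnalyticOnNhd ℂ T Ω := hTd.analyticOnNhd hΩo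
  set D1 := deriv T with hD1def
  set D2 := deriv D1 with hD2def
  set D3 := deriv D2 with hD3def
  set D4 := deriv D3 with hD4def
  have hA1 : AnalyticOnNhd ℂ D1 Ω := hA.deriv
  have hA2 : AnalyticOnNhd ℂ D2 Ω := hA1.deriv
  have hA3 : AnalyticOnNhd ℂ D3 Ω := hA2.deriv
  have hA4 : AnalyticOnNhd ℂ D4 Ω := hA3.deriv
  have hT2' : D2 x₀ = 0 := by
    have h2 : iteratedDeriv 2 T = D2 := by
      rw [hD2def, hD1def, iteratedDeriv_succ, iteratedDeriv_one]
    rw [← h2]; exact hT2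
  have hT3' : D3 x₀ = 0 := by
    have h3 : iteratedDeriv 3 T = D3 := by
      rw [hD3def, hD2def, hD1def, iteratedDeriv_succ, iteratedDeriv_succ, iteratedDeriv_one]
    rw [← h3]; exact hT3
  set b := D1 x₀ with hbdef
  have hbpos : 0 < ‖b‖ := norm_pos_iff.mpr hb0
  -- choose ρ
  have hcont : ContinuousAt D1 x₀ := (hA1 x₀ hx₀).continuousAt
  have hball : {w | ‖D1 w - b‖ ≤ ‖b‖/2} ∈ 𝓝 x₀ := by
    have h1 : Metric.closedBall b (‖b‖/2) ∈ 𝓝 b := Metric.closedBall_mem_nhds b (by positivity)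
    have h2 := hcont.preimage_mem_nhds h1
    refine Filter.mem_of_superset h2 ?_
    intro w hw
    simpa [Metric.mem_closedBall, dist_eq_norm] using hw
  obtain ⟨ρ', hρ'0, hρ'sub⟩ :=
    Metric.mem_nhds_iff.mp (Filter.inter_mem hball (hΩo.mem_nhds hx₀))
  set ρ := ρ'/2 with hρdef
  have hρ0 : 0 < ρ := by positivity
  have hρsub : Metric.closedBall x₀ ρ ⊆ {w | ‖D1 w - b‖ ≤ ‖b‖/2} ∩ Ω := by
    refine subset_trans (Metric.closedBall_subset_ball ?_) hρ'sub
    rw [hρdef]; linarith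
  have hρΩ : Metric.closedBall x₀ ρ ⊆ Ω := fun w hw => (hρsub hw).2
  have hρD1 : ∀ w ∈ Metric.closedBall x₀ ρ, ‖D1 w - b‖ ≤ ‖b‖/2 := fun w hw => (hρsub hw).1
  -- bound on fourth derivative
  obtain ⟨M₄', hM₄'⟩ := (isCompact_closedBall x₀ ρ).exists_bound_of_continuousOn
      ((hA4.continuousOn).mono hρΩ)
  set M₄ := max M₄' 1 with hM₄def
  have hM₄pos : (0:ℝ) < M₄ := lt_of_lt_of_le one_pos (le_max_right _ _)
  have hM₄ : ∀ w ∈ Metric.closedBall x₀ ρ, ‖D4 w‖ ≤ M₄ :=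
    fun w hw => (hM₄' w hw).trans (le_max_left _ _)
  -- constants
  set L := 3/2 * ‖b‖ with hLdef
  have hLpos : 0 < L := by rw [hLdef]; positivity
  set δ₀ := min (ρ/3) (1/(3*‖b‖)) with hδ₀def
  have hδ₀pos : 0 < δ₀ := by
    rw [hδ₀def]; apply lt_min (by positivity) (by positivity)
  have hδ₀ρ : 3 * δ₀ ≤ ρ := by
    have := min_le_left (ρ/3) (1/(3*‖b‖)); rw [← hδ₀def] at this; linarith
  have hδ₀L : L * δ₀ ≤ 1/2 := by
    have h1 : δ₀ ≤ 1/(3*‖b‖) := by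
      have := min_le_right (ρ/3) (1/(3*‖b‖)); rw [← hδ₀def] at this; exact this
    rw [hLdef]
    rw [div_eq_mul_inv, one_mul] at h1
    have h2 : (3 * ‖b‖) * δ₀ ≤ 1 := by
      rw [← mul_inv_cancel₀ (show (3*‖b‖) ≠ 0 by positivity)]
      exact mul_le_mul_of_nonneg_left h1 (by positivity)
    nlinarith
  set Bc := 18 * M₄ / ‖b‖ with hBcdef
  have hBcpos : 0 < Bc := by rw [hBcdef]; positivity
  set C₇ := 4 * L * (2 * (9 * M₄ * δ₀^2) + L^2) with hC₇def
  have hC₇pos : 0 < C₇ := by rw [hC₇def]; positivity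
  set K₁ := (Bc + 1) + C₇ with hK₁def
  have hK₁pos : 0 < K₁ := by rw [hK₁def]; positivity
  have hδ₀Ω : Metric.ball x₀ δ₀ ⊆ Ω := by
    refine subset_trans (Metric.ball_subset_closedBall.trans
      (Metric.closedBall_subset_closedBall ?_)) hρΩ
    linarith
  refine ⟨δ₀, hδ₀pos, K₁, hK₁pos, hδ₀Ω, ?_⟩
  intro δ hδ0 hδδ₀ x hx y hy z hz hxy hzy
  -- basic inclusions
  have hB3ρ : Metric.ball x₀ (3*δ) ⊆ Metric.closedBall x₀ ρ := by
    intro w hw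
    rw [Metric.mem_closedBall]
    rw [Metric.mem_ball] at hw
    have : 3*δ ≤ ρ := by nlinarith
    linarith
  have hB3Ω : Metric.ball x₀ (3*δ) ⊆ Ω := hB3ρ.trans hρΩ
  have hBδ3 : Metric.ball x₀ δ ⊆ Metric.ball x₀ (3*δ) := Metric.ball_subset_ball (by linarith)
  have hx3 : x ∈ Metric.ball x₀ (3*δ) := hBδ3 hx
  have hy3 : y ∈ Metric.ball x₀ (3*δ) := hBδ3 hy
  have hz3 : z ∈ Metric.ball x₀ (3*δ) := hBδ3 hz
  have hx₀δ : x₀ ∈ Metric.ball x₀ δ := Metric.mem_ball_self hδ0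
  have hx₀3 : x₀ ∈ Metric.ball x₀ (3*δ) := hBδ3 hx₀δ
  -- derivative facts
  have hTder : ∀ w ∈ Metric.ball x₀ (3*δ), HasDerivAt T (D1 w) w :=
    fun w hw => (hA w (hB3Ω hw)).differentiableAt.hasDerivAt
  have hD1der : ∀ w ∈ Metric.ball x₀ (3*δ), HasDerivAt D1 (D2 w) w :=
    fun w hw => (hA1 w (hB3Ω hw)).differentiableAt.hasDerivAt
  have hD2der : ∀ w ∈ Metric.ball x₀ (3*δ), HasDerivAt D2 (D3 w) w :=
    fun w hw => (hA2 w (hB3Ω hw)).differentiableAt.hasDerivAt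
  have hD3der : ∀ w ∈ Metric.ball x₀ (3*δ), HasDerivAt D3 (D4 w) w :=
    fun w hw => (hA3 w (hB3Ω hw)).differentiableAt.hasDerivAt
  have hM₄3 : ∀ w ∈ Metric.ball x₀ (3*δ), ‖D4 w‖ ≤ M₄ := fun w hw => hM₄ w (hB3ρ hw)
  have hconv3 : Convex ℝ (Metric.ball x₀ (3*δ)) := convex_ball x₀ (3*δ)
  have hconvδ : Convex ℝ (Metric.ball x₀ δ) := convex_ball x₀ δ
  -- third derivative bound
  have hD3b : ∀ w ∈ Metric.ball x₀ (3*δ), ‖D3 w‖ ≤ M₄ * (3*δ) := by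
    intro w hw
    have h1 := mvt' hconv3 hD3der hM₄3 hx₀3 hw
    rw [hT3', sub_zero] at h1
    refine h1.trans ?_
    have h2 : ‖w - x₀‖ ≤ 3*δ := by
      rw [Metric.mem_ball, dist_eq_norm] at hw; linarith
    exact mul_le_mul_of_nonneg_left h2 (le_of_lt hM₄pos)
  -- second derivative bound
  set M2 := 9 * M₄ * δ^2 with hM2def
  have hM2pos : 0 < M2 := by rw [hM2def]; positivity
  have hD2b : ∀ w ∈ Metric.ball x₀ (3*δ), ‖D2 w‖ ≤ M2 := by
    intro w hw
    have h1 := mvt' hconv3 hD2der hD3b hx₀3 hw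
    rw [hT2', sub_zero] at h1
    refine h1.trans ?_
    have h2 : ‖w - x₀‖ ≤ 3*δ := by
      rw [Metric.mem_ball, dist_eq_norm] at hw; linarith
    rw [hM2def]
    nlinarith
  -- Taylor second order for T
  have htay : ∀ w ∈ Metric.ball x₀ (3*δ), ∀ v ∈ Metric.ball x₀ (3*δ),
      ‖T v - T w - D1 w * (v - w)‖ ≤ M2 * ‖v - w‖ * ‖v - w‖ :=
    fun w hw v hv => taylor2 hconv3 hTder hD1der hD2b (le_of_lt hM2pos) hw hv
  -- the dslope machinery
  set Q := dslope T y with hQdef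
  have hQb : ∀ w ∈ Metric.ball x₀ (3*δ), ‖Q w - b‖ ≤ ‖b‖/2 := by
    intro w hw
    by_cases hwy : w = y
    · subst hwy
      rw [hQdef, dslope_same]
      exact hρD1 w (hB3ρ hw)
    · rw [hQdef, dslope_of_ne _ hwy, slope_def_field]
      have hg : ∀ u ∈ Metric.ball x₀ (3*δ),
          HasDerivAt (fun v => T v - b * v) (D1 u - b) u := by
        intro u hu
        exact ((hTder u hu).sub ((hasDerivAt_id u).const_mul b)).congr_deriv (by ring)
      have hmv := mvt' hconv3 hg (fun u hu => hρD1 u (hB3ρ hu)) hy3 hw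
      have hwy' : w - y ≠ 0 := sub_ne_zero.mpr hwy
      have key : (T w - T y)/(w - y) - b = ((T w - b*w) - (T y - b*y))/(w - y) := by
        field_simp; ring
      rw [key, norm_div]
      rw [div_le_iff₀ (by simpa [norm_pos_iff] using hwy')]
      calc ‖T w - b*w - (T y - b*y)‖ ≤ ‖b‖/2 * ‖w - y‖ := hmv
        _ = ‖b‖/2 * ‖w - y‖ := rfl
  have hQlb : ∀ w ∈ Metric.ball x₀ (3*δ), ‖b‖/2 ≤ ‖Q w‖ := by
    intro w hw
    have h1 := hQb w hw
    have h2 : ‖b‖ - ‖Q w‖ ≤ ‖b - Q w‖ := norm_sub_norm_le b (Q w)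
    rw [norm_sub_rev] at h2
    linarith
  have hQne : ∀ w ∈ Metric.ball x₀ (3*δ), Q w ≠ 0 := by
    intro w hw h0
    have := hQlb w hw
    rw [h0, norm_zero] at this
    linarith
  have hyB3n : Metric.ball x₀ (3*δ) ∈ 𝓝 y := isOpen_ball.mem_nhds hy3
  have hTdB3 : DifferentiableOn ℂ T (Metric.ball x₀ (3*δ)) := hTd.mono hB3Ω
  have hQd : DifferentiableOn ℂ Q (Metric.ball x₀ (3*δ)) :=
    (differentiableOn_dslope hyB3n).mpr hTdB3
  have hD1dB3 : DifferentiableOn ℂ D1 (Metric.ball x₀ (3*δ)) :=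
    fun w hw => ((hA1 w (hB3Ω hw)).differentiableAt.differentiableWithinAt)
  set nf : ℂ → ℂ := fun w => D1 w - Q w with hnfdef
  have hnd : DifferentiableOn ℂ nf (Metric.ball x₀ (3*δ)) := hD1dB3.sub hQd
  set N := dslope nf y with hNdef
  have hNd : DifferentiableOn ℂ N (Metric.ball x₀ (3*δ)) :=
    (differentiableOn_dslope hyB3n).mpr hnd
  have hnfy : nf y = 0 := by
    rw [hnfdef]; simp only [hQdef, dslope_same, hD1def]; ring
  have hNval : ∀ w, w ≠ y → N w = (D1 w - Q w)/(w - y) := by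
    intro w hwy
    rw [hNdef, dslope_of_ne _ hwy, slope_def_field, hnfy, sub_zero]
  have hNb' : ∀ w ∈ Metric.ball x₀ (3*δ), w ≠ y → ‖N w‖ ≤ M2 := by
    intro w hw hwy
    have hwy' : w - y ≠ 0 := sub_ne_zero.mpr hwy
    have hQw : Q w = (T w - T y)/(w - y) := by
      rw [hQdef, dslope_of_ne _ hwy, slope_def_field]
    have hid : N w = (T y - T w - D1 w * (y - w))/((w-y)*(w-y)) := by
      rw [hNval w hwy, hQw]
      field_simp
      ring
    rw [hid, norm_div, norm_mul]
    have h1 : ‖T y - T w - D1 w * (y - w)‖ ≤ M2 * ‖y - w‖ * ‖y - w‖ := htay w hw y hy3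
    have h2 : ‖y - w‖ = ‖w - y‖ := norm_sub_rev _ _
    rw [h2] at h1
    have hpos : 0 < ‖w - y‖ := by simpa [norm_pos_iff] using hwy'
    rw [div_le_iff₀ (by positivity), ← mul_assoc]
    exact h1
  have hNb : ∀ w ∈ Metric.ball x₀ (3*δ), ‖N w‖ ≤ M2 := by
    intro w hw
    by_cases hwy : w = y
    · subst hwy
      have hct : ContinuousAt N w :=
        (hNd.differentiableAt (isOpen_ball.mem_nhds hw)).continuousAt
      have htd : Filter.Tendsto (fun u => ‖N u‖) (𝓝[≠] w) (𝓝 ‖N w‖) :=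
        ((hct.tendsto.mono_left nhdsWithin_le_nhds).norm)
      apply le_of_tendsto htd
      filter_upwards [self_mem_nhdsWithin,
        mem_nhdsWithin_of_mem_nhds (isOpen_ball.mem_nhds hw)] with u hu1 hu2
      exact hNb' u hu2 hu1
    · exact hNb' w hw hwy
  set F : ℂ → ℂ := fun w => N w / Q w with hFdef
  have hFd : DifferentiableOn ℂ F (Metric.ball x₀ (3*δ)) := hNd.div hQd hQne
  have hFb : ∀ w ∈ Metric.ball x₀ (3*δ), ‖F w‖ ≤ Bc * δ^2 := by
    intro w hw
    rw [hFdef]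
    simp only [norm_div]
    have h1 : ‖N w‖/‖Q w‖ ≤ M2/(‖b‖/2) :=
      div_le_div₀ (le_of_lt hM2pos) (hNb w hw) (by positivity) (hQlb w hw)
    refine h1.trans (le_of_eq ?_)
    rw [hM2def, hBcdef]
    field_simp
    ring
  -- derivative bound via Schwarz
  have hF' : ∀ w ∈ Metric.ball x₀ δ, ‖deriv F w‖ ≤ (Bc + 1) * δ := by
    intro w hw
    have hsub : Metric.ball w (2*δ) ⊆ Metric.ball x₀ (3*δ) := by
      intro u hu
      have hw' : dist w x₀ < δ := hw
      have hu' : dist u w < 2*δ := hu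
      have : dist u x₀ < 3*δ := by
        calc dist u x₀ ≤ dist u w + dist w x₀ := dist_triangle u w x₀
          _ < 2*δ + δ := by linarith
          _ = 3*δ := by ring
      exact this
    have hd : DifferentiableOn ℂ F (Metric.ball w (2*δ)) := hFd.mono hsub
    have hmaps : Set.MapsTo F (Metric.ball w (2*δ)) (Metric.ball (F w) ((2*Bc + 1) * δ^2)) := by
      intro u hu
      rw [Metric.mem_ball, dist_eq_norm]
      have h1 : ‖F u‖ ≤ Bc*δ^2 := hFb u (hsub hu)
      have h2 : ‖F w‖ ≤ Bc*δ^2 := hFb w (hBδ3 hw)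
      have h3 : ‖F u - F w‖ ≤ ‖F u‖ + ‖F w‖ := norm_sub_le _ _
      nlinarith
    have hS := Complex.norm_deriv_le_div_of_mapsTo_ball hd (hmaps.mono_right Metric.ball_subset_closedBall) (by positivity)
    refine hS.trans ?_
    rw [div_le_iff₀ (by positivity)]
    nlinarith
  have hFder : ∀ w ∈ Metric.ball x₀ δ, HasDerivAt F (deriv F w) w :=
    fun w hw => (hFd.differentiableAt (isOpen_ball.mem_nhds (hBδ3 hw))).hasDerivAt
  have hFdiff : ‖F x - F z‖ ≤ (Bc+1)*δ*‖x - z‖ := mvt' hconvδ hFder hF' hz hx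
  -- identification of F
  have hFeq : ∀ w ∈ Metric.ball x₀ (3*δ), w ≠ y → F w = D1 w / (T w - T y) - 1/(w - y) := by
    intro w hw hwy
    have hwy' : w - y ≠ 0 := sub_ne_zero.mpr hwy
    have hQw : Q w = (T w - T y)/(w - y) := by
      rw [hQdef, dslope_of_ne _ hwy, slope_def_field]
    have hQnew : Q w ≠ 0 := hQne w hw
    have hTne : T w - T y ≠ 0 := by
      intro h0; apply hQnew; rw [hQw, h0, zero_div]
    rw [hFdef]
    simp only
    rw [hNval w hwy, hQw]
    field_simp
  -- the B-part
  set c' := (starRingEnd ℂ) (T y) with hc'def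
  set Bp : ℂ → ℂ := fun w => c' * D1 w / (c' * T w - 1) with hBpdef
  have hD1b : ∀ w ∈ Metric.ball x₀ δ, ‖D1 w‖ ≤ L := by
    intro w hw
    have h1 := hρD1 w (hB3ρ (hBδ3 hw))
    have h2 : ‖D1 w‖ - ‖b‖ ≤ ‖D1 w - b‖ := norm_sub_norm_le _ _
    rw [hLdef]; linarith
  have hTb : ∀ w ∈ Metric.ball x₀ δ, ‖T w‖ ≤ L * δ := by
    intro w hw
    have hmv := mvt' hconvδ (fun u hu => hTder u (hBδ3 hu)) hD1b hx₀δ hw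
    rw [hT0, sub_zero] at hmv
    refine hmv.trans ?_
    have h2 : ‖w - x₀‖ ≤ δ := by
      rw [Metric.mem_ball, dist_eq_norm] at hw; linarith
    exact mul_le_mul_of_nonneg_left h2 (le_of_lt hLpos)
  have hLδhalf : L * δ ≤ 1/2 := by
    have : L * δ ≤ L * δ₀ := mul_le_mul_of_nonneg_left hδδ₀ (le_of_lt hLpos)
    linarith
  have hc'norm : ‖c'‖ = ‖T y‖ := by
    rw [hc'def]; exact RCLike.norm_conj _
  have hc'b : ‖c'‖ ≤ 1/2 := by
    rw [hc'norm]; exact (hTb y hy).trans hLδhalf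
  have hden : ∀ w ∈ Metric.ball x₀ δ, 1/2 ≤ ‖c' * T w - 1‖ := by
    intro w hw
    have h1 : ‖(1:ℂ)‖ - ‖c' * T w‖ ≤ ‖1 - c' * T w‖ := norm_sub_norm_le _ _
    rw [norm_one, norm_mul] at h1
    have h2 : ‖T w‖ ≤ 1/2 := (hTb w hw).trans hLδhalf
    have h3 : ‖c'‖ * ‖T w‖ ≤ 1/2 * (1/2) :=
      mul_le_mul hc'b h2 (norm_nonneg _) (by norm_num)
    have h4 : ‖c' * T w - 1‖ = ‖1 - c' * T w‖ := by rw [norm_sub_rev]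
    rw [h4]; linarith
  have hdenne : ∀ w ∈ Metric.ball x₀ δ, c' * T w - 1 ≠ 0 := by
    intro w hw h0
    have := hden w hw
    rw [h0, norm_zero] at this
    linarith
  have hD1diff : ‖D1 x - D1 z‖ ≤ M2 * ‖x - z‖ :=
    mvt' hconvδ (fun u hu => hD1der u (hBδ3 hu)) (fun u hu => hD2b u (hBδ3 hu)) hz hx
  have hTdiff : ‖T x - T z‖ ≤ L * ‖x - z‖ :=
    mvt' hconvδ (fun u hu => hTder u (hBδ3 hu)) hD1b hz hx
  set E := c' * ((D1 x - D1 z) * T z + D1 z * (T z - T x)) - (D1 x - D1 z) with hEdef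
  have hBpid : Bp x - Bp z = c' * E / ((c' * T x - 1) * (c' * T z - 1)) := by
    rw [hBpdef, hEdef]
    simp only
    field_simp [hdenne x hx, hdenne z hz]
    ring
  have hEb : ‖E‖ ≤ (2*M2 + L^2) * ‖x - z‖ := by
    rw [hEdef]
    have h1 : ‖c' * ((D1 x - D1 z) * T z + D1 z * (T z - T x))‖
        ≤ ‖(D1 x - D1 z) * T z + D1 z * (T z - T x)‖ := by
      rw [norm_mul]
      nlinarith [norm_nonneg ((D1 x - D1 z) * T z + D1 z * (T z - T x)), hc'b,
        norm_nonneg c']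
    have h2 : ‖(D1 x - D1 z) * T z + D1 z * (T z - T x)‖
        ≤ ‖D1 x - D1 z‖ * ‖T z‖ + ‖D1 z‖ * ‖T z - T x‖ := by
      calc ‖(D1 x - D1 z) * T z + D1 z * (T z - T x)‖
          ≤ ‖(D1 x - D1 z) * T z‖ + ‖D1 z * (T z - T x)‖ := norm_add_le _ _
        _ = ‖D1 x - D1 z‖ * ‖T z‖ + ‖D1 z‖ * ‖T z - T x‖ := by rw [norm_mul, norm_mul]
    have h3 : ‖T z‖ ≤ 1 := le_trans ((hTb z hz).trans hLδhalf) (by norm_num)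
    have h4 : ‖D1 z‖ ≤ L := hD1b z hz
    have h5 : ‖T z - T x‖ ≤ L * ‖x - z‖ := by
      rw [norm_sub_rev]; exact hTdiff
    have h6 : ‖D1 x - D1 z‖ ≤ M2 * ‖x - z‖ := hD1diff
    have h0 : ‖c' * ((D1 x - D1 z) * T z + D1 z * (T z - T x)) - (D1 x - D1 z)‖
        ≤ ‖c' * ((D1 x - D1 z) * T z + D1 z * (T z - T x))‖ + ‖D1 x - D1 z‖ :=
      norm_sub_le _ _
    have hnn1 : (0:ℝ) ≤ ‖T z‖ := norm_nonneg _
    have hnn2 : (0:ℝ) ≤ ‖D1 x - D1 z‖ := norm_nonneg _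
    have hnn3 : (0:ℝ) ≤ ‖x - z‖ := norm_nonneg _
    have hnn4 : (0:ℝ) ≤ ‖D1 z‖ := norm_nonneg _
    have hnn5 : (0:ℝ) ≤ ‖T z - T x‖ := norm_nonneg _
    nlinarith [mul_le_mul h6 h3 hnn1 (by positivity : (0:ℝ) ≤ M2 * ‖x - z‖),
      mul_le_mul h4 h5 hnn5 (le_of_lt hLpos)]
  have hc'Lδ : ‖c'‖ ≤ L * δ := by rw [hc'norm]; exact hTb y hy
  have hBpb : ‖Bp x - Bp z‖ ≤ C₇ * δ * ‖x - z‖ := by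
    rw [hBpid, norm_div, norm_mul, norm_mul]
    have hd1 := hden x hx
    have hd2 := hden z hz
    have hDpos : (0:ℝ) < ‖c' * T x - 1‖ * ‖c' * T z - 1‖ := by nlinarith
    rw [div_le_iff₀ hDpos]
    have h14 : 1/4 ≤ ‖c' * T x - 1‖ * ‖c' * T z - 1‖ := by nlinarith
    have hM2le : M2 ≤ 9*M₄*δ₀^2 := by
      rw [hM2def]
      have hsq : δ^2 ≤ δ₀^2 := pow_le_pow_left₀ hδ0.le hδδ₀ 2
      nlinarith
    have hLHS : ‖c'‖*‖E‖ ≤ (L*δ) * ((2*M2+L^2) * ‖x - z‖) :=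
      mul_le_mul hc'Lδ hEb (norm_nonneg _) (by positivity)
    have hstep : (L*δ) * ((2*M2+L^2) * ‖x - z‖) * 4 ≤ C₇ * δ * ‖x - z‖ := by
      rw [hC₇def]
      have h9 : 2*M2 + L^2 ≤ 2*(9*M₄*δ₀^2) + L^2 := by linarith
      calc (L*δ) * ((2*M2+L^2) * ‖x - z‖) * 4
          = (2*M2+L^2) * (4*L*δ*‖x - z‖) := by ring
        _ ≤ (2*(9*M₄*δ₀^2)+L^2) * (4*L*δ*‖x - z‖) :=
            mul_le_mul_of_nonneg_right h9 (by positivity)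
        _ = 4 * L * (2 * (9 * M₄ * δ₀^2) + L^2) * δ * ‖x - z‖ := by ring
    have hfinal : ‖c'‖*‖E‖ ≤ C₇*δ*‖x - z‖ * (1/4) := by linarith
    refine hfinal.trans ?_
    have hC₇nn : (0:ℝ) ≤ C₇*δ*‖x - z‖ := by positivity
    exact mul_le_mul_of_nonneg_left h14 hC₇nn
  -- final assembly
  have hgf : ∀ w, w ∈ Metric.ball x₀ δ → w ≠ y →
      gfun T w y = (2*(Real.pi:ℂ))⁻¹ * (F w - Bp w) := by
    intro w hw hwy
    have h1 := hFeq w (hBδ3 hw) hwy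
    simp only [gfun, hBpdef]
    rw [← hD1def, h1]
    ring
  rw [hgf x hx hxy, hgf z hz hzy]
  have hsplit : (2*(Real.pi:ℂ))⁻¹ * (F x - Bp x) - (2*(Real.pi:ℂ))⁻¹ * (F z - Bp z)
      = (2*(Real.pi:ℂ))⁻¹ * ((F x - F z) - (Bp x - Bp z)) := by ring
  rw [hsplit, norm_mul]
  have hπ : ‖(2*(Real.pi:ℂ))⁻¹‖ ≤ 1 := by
    rw [norm_inv, show (2*(Real.pi:ℂ)) = ((2*Real.pi : ℝ):ℂ) by push_cast; ring,
      Complex.norm_real, Real.norm_eq_abs, abs_of_pos (by positivity)]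
    have h3 := Real.pi_gt_three
    have h1 : (1:ℝ) ≤ 2*Real.pi := by linarith
    exact inv_le_one_of_one_le₀ h1
  have hcomb : ‖(F x - F z) - (Bp x - Bp z)‖ ≤ K₁ * ‖x - z‖ * δ := by
    have htri : ‖(F x - F z) - (Bp x - Bp z)‖ ≤ ‖F x - F z‖ + ‖Bp x - Bp z‖ := norm_sub_le _ _
    have he : K₁ * ‖x - z‖ * δ = (Bc+1)*δ*‖x - z‖ + C₇*δ*‖x - z‖ := by rw [hK₁def]; ring
    rw [he]
    linarith
  calc ‖(2*(Real.pi:ℂ))⁻¹‖ * ‖(F x - F z) - (Bp x - Bp z)‖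
      ≤ 1 * (K₁ * ‖x - z‖ * δ) := by
        apply mul_le_mul hπ hcomb (norm_nonneg _) (by norm_num)
    _ = K₁ * ‖x - z‖ * δ := one_mul _
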